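/- The sorting map on ℝⁿ, sending a vector to its nondecreasing rearrangement, is 1-Lipschitz with respect to the Euclidean norm: for all x, y ∈ ℝⁿ, ‖sort(x) − sort(y)‖₂ ≤ ‖x − y‖₂. -/
import Mathlib

/-- The sorting map (nondecreasing rearrangement) on `ℝⁿ` is 1-Lipschitz for the
Euclidean norm: if `xs` and `ys` are the sorted rearrangements of `x` and `y`, then
`‖xs - ys‖₂ ≤ ‖x - y‖₂`. -/
theorem sort_one_lipschitz_euclidean
    (n : ℕ) (x y xs ys : Fin n → ℝ) (σ τ : Equiv.Perm (Fin n))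
    (hxs : xs = x ∘ σ) (hys : ys = y ∘ τ)
    (hxsmono : Monotone xs) (hysmono : Monotone ys) :
    Real.sqrt (∑ i : Fin n, (xs i - ys i) ^ 2) ≤
      Real.sqrt (∑ i : Fin n, (x i - y i) ^ 2) := by
  apply Real.sqrt_le_sqrt
  have hmono : Monovary xs ys := hxsmono.monovary hysmono
  set π : Equiv.Perm (Fin n) := σ.trans τ.symm with hπ
  have key : ∑ i, xs i * ys (π i) ≤ ∑ i, xs i * ys i :=
    hmono.sum_mul_comp_perm_le_sum_mul (σ := π)
  have hxy : ∑ i, x i * y i = ∑ i, xs i * ys (π i) := by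
    rw [← Equiv.sum_comp σ (fun i => x i * y i)]
    refine Finset.sum_congr rfl fun i _ => ?_
    simp [hxs, hys, hπ]
  have hx2 : ∑ i, (x i) ^ 2 = ∑ i, (xs i) ^ 2 := by
    rw [← Equiv.sum_comp σ (fun i => (x i) ^ 2)]
    refine Finset.sum_congr rfl fun i _ => ?_
    simp [hxs]
  have hy2 : ∑ i, (y i) ^ 2 = ∑ i, (ys i) ^ 2 := by
    rw [← Equiv.sum_comp τ (fun i => (y i) ^ 2)]
    refine Finset.sum_congr rfl fun i _ => ?_
    simp [hys]
  have e1 : ∑ i, (xs i - ys i) ^ 2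
      = ∑ i, (xs i) ^ 2 - 2 * ∑ i, xs i * ys i + ∑ i, (ys i) ^ 2 := by
    simp [sub_sq, Finset.sum_add_distrib, Finset.sum_sub_distrib, Finset.mul_sum, mul_assoc]
  have e2 : ∑ i, (x i - y i) ^ 2
      = ∑ i, (x i) ^ 2 - 2 * ∑ i, x i * y i + ∑ i, (y i) ^ 2 := by
    simp [sub_sq, Finset.sum_add_distrib, Finset.sum_sub_distrib, Finset.mul_sum, mul_assoc]
  rw [e1, e2, hx2, hy2, hxy]
  linarith
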